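/- Let n, k, s be integers with n ≥ k ≥ 4 and 1 ≤ s ≤ ⌊k/2⌋ − 1. The graph W_{n,k−1,s} = K_s ∨ ((n−k+s+1)K_1 ∪ K_{k−2s−1}) is connected and contains no path on k vertices. -/

import Mathlib

/-- The graph `W n k s = K_s ∨ ((n−k+s)K_1 ∪ K_{k−2s})` on vertex set `Fin n`:
the first `s` vertices form a dominating clique `X`, the vertices with index
in `[s, k−s)` form a clique `Y` (so `X ∪ Y` is a clique on `k − s` vertices),
and the remaining `n − k + s` vertices are independent, joined only to `X`. -/
def Wgraph (n k s : ℕ) : SimpleGraph (Fin n) where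
  Adj x y := x ≠ y ∧ (x.val < s ∨ y.val < s ∨ (x.val < k - s ∧ y.val < k - s))
  symm := by constructor; rintro x y ⟨hxy, h⟩; exact ⟨hxy.symm, by tauto⟩
  loopless := by constructor; rintro x ⟨h, -⟩; exact h rfl

/-- For `n ≥ k ≥ 4` and `1 ≤ s ≤ ⌊k/2⌋ − 1`, the graph
`W_{n,k−1,s} = K_s ∨ ((n−k+s+1)K_1 ∪ K_{k−2s−1})` is connected and contains
no path on `k` vertices. -/
theorem stmt_11 (n k s : ℕ) (hkn : k ≤ n) (hk : 4 ≤ k) (hs1 : 1 ≤ s)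
    (hst : s ≤ k / 2 - 1) :
    (Wgraph n (k - 1) s).Connected ∧
    ¬ ∃ (a b : Fin n) (p : (Wgraph n (k - 1) s).Walk a b),
        p.IsPath ∧ p.length + 1 = k := by
  have hn : 0 < n := by omega
  have h2s : 2 * s + 2 ≤ k := by omega
  constructor
  · -- connectivity: every vertex is adjacent to vertex 0, which lies in the clique `X`
    have hreach : ∀ x : Fin n, (Wgraph n (k - 1) s).Reachable x ⟨0, hn⟩ := by
      intro x
      by_cases hx : x = ⟨0, hn⟩
      · exact hx ▸ SimpleGraph.Reachable.refl x
      · exact SimpleGraph.Adj.reachable ⟨hx, Or.inr (Or.inl hs1)⟩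
    haveI : Nonempty (Fin n) := ⟨⟨0, hn⟩⟩
    exact ⟨fun x y => (hreach x).trans (hreach y).symm⟩
  · rintro ⟨a, b, p, hp, hlen⟩
    have hL : p.support.length = k := by
      rw [SimpleGraph.Walk.length_support]; omega
    have hnd : p.support.Nodup := hp.support_nodup
    have hch : p.support.IsChain (Wgraph n (k - 1) s).Adj := p.isChain_adj_support
    -- the vertex at position i of the path
    set w : ℕ → Fin n := fun i => p.support.getD i ⟨0, hn⟩ with hw
    set v : ℕ → ℕ := fun i => (w i).val with hv
    have hwget : ∀ i (h : i < k), w i = p.support.get ⟨i, by omega⟩ := by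
      intro i h
      simp only [hw]
      exact List.getD_eq_getElem _ _ (by omega)
    have hvinj : ∀ i j, i < k → j < k → v i = v j → i = j := by
      intro i j hi hj h
      have h' : w i = w j := Fin.ext h
      rw [hwget i hi, hwget j hj] at h'
      have := List.nodup_iff_injective_get.mp hnd h'
      simpa using congrArg Fin.val this
    have hadjc : ∀ i, i + 1 < k → (Wgraph n (k - 1) s).Adj (w i) (w (i + 1)) := by
      intro i h
      rw [hwget i (by omega), hwget (i + 1) h]
      exact List.isChain_iff_getElem.mp hch i (by omega)
    -- the threshold between the clique part and the independent part
    set t := k - 1 - s with ht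
    have hts : s + 1 ≤ t := by omega
    have hadj' : ∀ i, i + 1 < k →
        (v i < s ∨ v (i + 1) < s ∨ (v i < t ∧ v (i + 1) < t)) := by
      intro i h
      exact (hadjc i h).2
    -- neighbors of `Z`-positions are `X`-positions
    have hZX1 : ∀ i, i + 1 < k → t ≤ v i → v (i + 1) < s := by
      intro i h hz
      rcases hadj' i h with h1 | h2 | h3 <;> omega
    have hZX2 : ∀ i, i + 1 < k → t ≤ v (i + 1) → v i < s := by
      intro i h hz
      rcases hadj' i h with h1 | h2 | h3 <;> omega
    classical
    set XP := (Finset.range k).filter (fun i => v i < s) with hXP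
    set YP := (Finset.range k).filter (fun i => s ≤ v i ∧ v i < t) with hYP
    set ZP := (Finset.range k).filter (fun i => t ≤ v i) with hZP
    have hXmem : ∀ i, i ∈ XP ↔ (i < k ∧ v i < s) := by
      intro i; simp [hXP, Finset.mem_filter, Finset.mem_range]
    have hYmem : ∀ i, i ∈ YP ↔ (i < k ∧ s ≤ v i ∧ v i < t) := by
      intro i; simp [hYP, Finset.mem_filter, Finset.mem_range]
    have hZmem : ∀ i, i ∈ ZP ↔ (i < k ∧ t ≤ v i) := by
      intro i; simp [hZP, Finset.mem_filter, Finset.mem_range]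
    -- cardinality bounds
    have hXc : XP.card ≤ s := by
      have := Finset.card_le_card_of_injOn v
        (fun i hi => Finset.mem_range.mpr ((hXmem i).mp hi).2)
        (fun i hi j hj h => hvinj i j ((hXmem i).mp hi).1 ((hXmem j).mp hj).1 h)
      simpa using this
    have hYc : YP.card ≤ t - s := by
      have := Finset.card_le_card_of_injOn v
        (fun i hi => Finset.mem_Ico.mpr ⟨((hYmem i).mp hi).2.1, ((hYmem i).mp hi).2.2⟩)
        (fun i hi j hj h => hvinj i j ((hYmem i).mp hi).1 ((hYmem j).mp hj).1 h)
      simpa [Nat.card_Ico] using this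
    -- partition of the `k` positions
    have hsplit : XP.card + YP.card + ZP.card = k := by
      have hU : XP ∪ YP ∪ ZP = Finset.range k := by
        ext i
        simp only [Finset.mem_union, hXP, hYP, hZP, Finset.mem_filter, Finset.mem_range]
        omega
      have d1 : Disjoint XP YP := by
        rw [Finset.disjoint_left]
        intro i hi hj
        have := (hXmem i).mp hi
        have := (hYmem i).mp hj
        omega
      have d2 : Disjoint (XP ∪ YP) ZP := by
        rw [Finset.disjoint_left]
        intro i hi hj
        have hz := (hZmem i).mp hj
        rcases Finset.mem_union.mp hi with h | h
        · have := (hXmem i).mp h; omega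
        · have := (hYmem i).mp h; omega
      have := Finset.card_union_of_disjoint d2
      rw [Finset.card_union_of_disjoint d1] at this
      rw [← this, hU, Finset.card_range]
    -- |ZP| ≤ |XP| + 1 via the successor injection
    have hZc1 : ZP.card ≤ XP.card + 1 := by
      have herase : (ZP.erase (k - 1)).card ≤ XP.card := by
        apply Finset.card_le_card_of_injOn (· + 1)
        · intro i hi
          have hne := Finset.ne_of_mem_erase hi
          have hiz := (hZmem i).mp (Finset.mem_of_mem_erase hi)
          have h1 : i + 1 < k := by omega
          exact (hXmem (i + 1)).mpr ⟨h1, hZX1 i h1 hiz.2⟩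
        · intro i _ j _ h; simp only at h; omega
      have := Finset.pred_card_le_card_erase (s := ZP) (a := k - 1)
      omega
    have hZc : s + 1 ≤ ZP.card := by omega
    -- hence YP is nonempty
    have hYne : YP.Nonempty := by
      rw [← Finset.card_pos]; omega
    obtain ⟨j0, hj0mem, hj0le⟩ : ∃ j0 ∈ YP, ∀ y ∈ YP, j0 ≤ y :=
      ⟨YP.min' hYne, YP.min'_mem hYne, fun y hy => YP.min'_le y hy⟩
    have hj0Y := (hYmem j0).mp hj0mem
    by_cases hz0 : j0 = 0
    · -- `0 ∉ ZP`, so the predecessor injection gives |ZP| ≤ |XP| ≤ s, contradiction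
      have h0Z : ∀ i ∈ ZP, 1 ≤ i := by
        intro i hi
        have hiz := (hZmem i).mp hi
        rcases Nat.eq_zero_or_pos i with h | h
        · exfalso; rw [h, ← hz0] at hiz; omega
        · omega
      have : ZP.card ≤ XP.card := by
        apply Finset.card_le_card_of_injOn (· - 1)
        · intro i hi
          have hiz := (hZmem i).mp hi
          have h1 : 1 ≤ i := h0Z i hi
          have he : i - 1 + 1 = i := by omega
          refine (hXmem (i - 1)).mpr ⟨by omega, ?_⟩
          apply hZX2 (i - 1) (by omega)
          rw [he]; exact hiz.2
        · intro i hi j hj h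
          simp only at h
          have := h0Z i hi
          have := h0Z j hj
          omega
      omega
    · -- `j0 ≥ 1`; position `j0 - 1` is an `X`-position, but every `X`-position
      -- is the predecessor of a `Z`-position, forcing `j0 ∈ ZP`, contradiction
      have hj1 : 1 ≤ j0 := by omega
      have he : j0 - 1 + 1 = j0 := by omega
      have hadj'' := hadj' (j0 - 1) (by omega)
      rw [he] at hadj''
      have hx' : v (j0 - 1) < s := by
        rcases hadj'' with h1 | h2 | h3
        · exact h1
        · omega
        · by_contra hcon
          push_neg at hcon
          have hmem : j0 - 1 ∈ YP := (hYmem (j0 - 1)).mpr ⟨by omega, hcon, h3.1⟩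
          have := hj0le (j0 - 1) hmem
          omega
      have hsub : (ZP.erase 0).image (· - 1) ⊆ XP := by
        intro x hx
        obtain ⟨i, hi, rfl⟩ := Finset.mem_image.mp hx
        have hne := Finset.ne_of_mem_erase hi
        have hiz := (hZmem i).mp (Finset.mem_of_mem_erase hi)
        have he' : i - 1 + 1 = i := by omega
        refine (hXmem (i - 1)).mpr ⟨by omega, ?_⟩
        apply hZX2 (i - 1) (by omega)
        rw [he']; exact hiz.2
      have hcardim : ((ZP.erase 0).image (· - 1)).card = (ZP.erase 0).card := by
        apply Finset.card_image_of_injOn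
        intro i hi j hj h
        have hi0 := Finset.ne_of_mem_erase hi
        have hj0' := Finset.ne_of_mem_erase hj
        simp only at h
        omega
      have hZe : s ≤ (ZP.erase 0).card := by
        have := Finset.pred_card_le_card_erase (s := ZP) (a := 0)
        omega
      have heq : (ZP.erase 0).image (· - 1) = XP :=
        Finset.eq_of_subset_of_card_le hsub (by omega)
      have hj0X : j0 - 1 ∈ XP := (hXmem (j0 - 1)).mpr ⟨by omega, hx'⟩
      rw [← heq] at hj0X
      obtain ⟨i, hi, hie⟩ := Finset.mem_image.mp hj0X
      have hi0 := Finset.ne_of_mem_erase hi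
      have hiz := (hZmem i).mp (Finset.mem_of_mem_erase hi)
      have hij : i = j0 := by omega
      rw [hij] at hiz
      omega
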